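/- For every real number x with |x| < π/2, the series ∑_{m=1}^∞ 2·a_m·x^{2m-1} converges and equals tan x, where a_m := (2/π)^{2m} · ∑_{k=0}^∞ 1/(2k+1)^{2m}. -/

import Mathlib

open Real Filter Finset Topology

lemma prod_range_two_mul (f : ℕ → ℝ) (N : ℕ) :
    ∏ j ∈ Finset.range (2 * N), f j =
      (∏ j ∈ Finset.range N, f (2 * j)) * ∏ j ∈ Finset.range N, f (2 * j + 1) := by
  induction N with
  | zero => simp
  | succ n ih =>
    have : 2 * (n + 1) = (2 * n) + 1 + 1 := by ring
    rw [this, Finset.prod_range_succ, Finset.prod_range_succ, Finset.prod_range_succ,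
      Finset.prod_range_succ, ih]
    ring

lemma tendsto_cos_prod (x : ℝ) (hx : |x| < π / 2) :
    Tendsto (fun N : ℕ => ∏ j ∈ Finset.range N, (1 - 4 * x ^ 2 / ((2 * (j:ℝ) + 1) ^ 2 * π ^ 2)))
      atTop (𝓝 (cos x)) := by
  rcases eq_or_ne x 0 with rfl | hx0
  · simpa using (tendsto_const_nhds : Tendsto (fun _ : ℕ => (1:ℝ)) atTop (𝓝 1))
  · have hπ := pi_pos
    have hsin : sin x ≠ 0 := by
      rcases hx0.lt_or_gt with h | h
      · have : 0 < sin (-x) := sin_pos_of_pos_of_lt_pi (by linarith)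
          (by rw [abs_lt] at hx; linarith [pi_gt_three])
        rw [sin_neg] at this; intro h0; rw [h0] at this; simp at this
      · have : 0 < sin x := sin_pos_of_pos_of_lt_pi h
          (by rw [abs_lt] at hx; linarith [pi_gt_three])
        exact this.ne'
    have hA : Tendsto (fun N : ℕ => π * (2 * x / π) *
        ∏ j ∈ Finset.range (2 * N), (1 - (2 * x / π) ^ 2 / ((j:ℝ) + 1) ^ 2))
        atTop (𝓝 (sin (2 * x))) := by
      have := (Real.tendsto_euler_sin_prod (2 * x / π)).comp
        (tendsto_id.const_mul_atTop' (zero_lt_two) : Tendsto (fun N : ℕ => 2 * N) atTop atTop)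
      have hπx : π * (2 * x / π) = 2 * x := by field_simp
      simpa [Function.comp_def, hπx] using this
    have hB : Tendsto (fun N : ℕ => π * (x / π) *
        ∏ j ∈ Finset.range N, (1 - (x / π) ^ 2 / ((j:ℝ) + 1) ^ 2))
        atTop (𝓝 (sin x)) := by
      have := Real.tendsto_euler_sin_prod (x / π)
      have hπx : π * (x / π) = x := by field_simp
      simpa [hπx] using this
    -- key algebra: A_{2N} = 2 * B_N * P_N
    have key : ∀ N : ℕ, π * (2 * x / π) *
        ∏ j ∈ Finset.range (2 * N), (1 - (2 * x / π) ^ 2 / ((j:ℝ) + 1) ^ 2) =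
        2 * (π * (x / π) * ∏ j ∈ Finset.range N, (1 - (x / π) ^ 2 / ((j:ℝ) + 1) ^ 2)) *
        ∏ j ∈ Finset.range N, (1 - 4 * x ^ 2 / ((2 * (j:ℝ) + 1) ^ 2 * π ^ 2)) := by
      intro N
      rw [prod_range_two_mul (fun j => (1 - (2 * x / π) ^ 2 / ((j:ℝ) + 1) ^ 2)) N]
      have h1 : ∀ j : ℕ, (1 - (2 * x / π) ^ 2 / ((2 * (j:ℝ) + 1) + 1) ^ 2)
          = (1 - (x / π) ^ 2 / ((j:ℝ) + 1) ^ 2) := by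
        intro j
        have : ((2:ℝ) * j + 1 + 1) = 2 * (j + 1) := by ring
        rw [this]
        have hj : ((j:ℝ) + 1) ≠ 0 := by positivity
        field_simp
      have h2 : ∀ j : ℕ, (1 - (2 * x / π) ^ 2 / ((2 * (j:ℝ)) + 1) ^ 2)
          = (1 - 4 * x ^ 2 / ((2 * (j:ℝ) + 1) ^ 2 * π ^ 2)) := by
        intro j
        have hj : ((2:ℝ) * j + 1) ≠ 0 := by positivity
        field_simp
        ring
      simp only [Nat.cast_mul, Nat.cast_ofNat, Nat.cast_add, Nat.cast_one]
      rw [Finset.prod_congr rfl (fun j _ => h1 j), Finset.prod_congr rfl (fun j _ => h2 j)]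
      ring
    have hBne : ∀ᶠ N in atTop, (2 : ℝ) * (π * (x / π) *
        ∏ j ∈ Finset.range N, (1 - (x / π) ^ 2 / ((j:ℝ) + 1) ^ 2)) ≠ 0 := by
      have := hB.eventually_ne hsin
      filter_upwards [this] with N hN
      intro h
      exact hN (by linarith [mul_eq_zero.mp h] )
    have hdiv : Tendsto (fun N : ℕ =>
        (π * (2 * x / π) * ∏ j ∈ Finset.range (2 * N), (1 - (2 * x / π) ^ 2 / ((j:ℝ) + 1) ^ 2)) /
        (2 * (π * (x / π) * ∏ j ∈ Finset.range N, (1 - (x / π) ^ 2 / ((j:ℝ) + 1) ^ 2))))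
        atTop (𝓝 (sin (2 * x) / (2 * sin x))) :=
      hA.div (hB.const_mul 2) (by simpa using hsin)
    have hcos : sin (2 * x) / (2 * sin x) = cos x := by
      rw [sin_two_mul]; field_simp
    rw [hcos] at hdiv
    refine hdiv.congr' ?_
    filter_upwards [hBne] with N hN
    rw [key N, mul_div_cancel_left₀ _ hN]

lemma summable_inv_odd_sq : Summable (fun j : ℕ => 1 / (2 * (j:ℝ) + 1) ^ 2) := by
  have h : Summable (fun j : ℕ => 1 / ((j:ℝ) + 1) ^ 2) := by
    have := (summable_nat_add_iff (f := fun n : ℕ => 1 / (n:ℝ) ^ 2) 1).mpr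
      (Real.summable_one_div_nat_pow.mpr one_lt_two)
    simpa using this
  refine Summable.of_nonneg_of_le (fun j => by positivity) (fun j => ?_) h
  have h1 : (0:ℝ) < ((j:ℝ) + 1) ^ 2 := by positivity
  have h2 : ((j:ℝ) + 1) ^ 2 ≤ (2 * (j:ℝ) + 1) ^ 2 := by
    nlinarith [Nat.cast_nonneg (α := ℝ) j]
  exact one_div_le_one_div_of_le h1 h2

lemma factor_pos {y : ℝ} (hy : |y| < π / 2) (j : ℕ) :
    0 < 1 - 4 * y ^ 2 / ((2 * (j:ℝ) + 1) ^ 2 * π ^ 2) := by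
  have hπ := pi_pos
  have h1 : 4 * y ^ 2 < π ^ 2 := by
    rw [abs_lt] at hy; nlinarith
  have h2 : (1:ℝ) ≤ (2 * (j:ℝ) + 1) ^ 2 := by nlinarith [Nat.cast_nonneg (α := ℝ) j]
  have h3 : 4 * y ^ 2 / ((2 * (j:ℝ) + 1) ^ 2 * π ^ 2) < 1 := by
    rw [div_lt_one (by positivity)]; nlinarith
  linarith

lemma hasSum_log_cos {y : ℝ} (hy : |y| < π / 2) :
    HasSum (fun j : ℕ => Real.log (1 - 4 * y ^ 2 / ((2 * (j:ℝ) + 1) ^ 2 * π ^ 2)))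
      (Real.log (cos y)) := by
  have hπ := pi_pos
  have hcos : 0 < cos y := by
    rw [abs_lt] at hy; exact cos_pos_of_mem_Ioo ⟨hy.1, hy.2⟩
  have hεp : 0 < π ^ 2 - 4 * y ^ 2 := by rw [abs_lt] at hy; nlinarith
  have hbound : ∀ j : ℕ, |Real.log (1 - 4 * y ^ 2 / ((2 * (j:ℝ) + 1) ^ 2 * π ^ 2))| ≤
      (4 * y ^ 2 / (π ^ 2 - 4 * y ^ 2)) * (1 / (2 * (j:ℝ) + 1) ^ 2) := by
    intro j
    set t := 4 * y ^ 2 / ((2 * (j:ℝ) + 1) ^ 2 * π ^ 2) with ht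
    set D := (2 * (j:ℝ) + 1) ^ 2 with hD
    have hD1 : (1:ℝ) ≤ D := by
      rw [hD]; nlinarith [Nat.cast_nonneg (α := ℝ) j]
    have hDpos : (0:ℝ) < D := by linarith
    have hden : 0 < D * π ^ 2 - 4 * y ^ 2 := by nlinarith
    have hpos : 0 < 1 - t := by
      rw [ht]
      have : t < 1 := by
        rw [ht, div_lt_one (by positivity)]; nlinarith
      linarith [this]
    have htn : 0 ≤ t := by rw [ht]; positivity
    have hle : Real.log (1 - t) ≤ 0 := Real.log_nonpos (by linarith) (by linarith)
    have hfrac : t / (1 - t) = 4 * y ^ 2 / (D * π ^ 2 - 4 * y ^ 2) := by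
      rw [div_eq_div_iff hpos.ne' hden.ne', ht]
      field_simp
    have hlog : -Real.log (1 - t) ≤ t / (1 - t) := by
      have h1 : Real.log ((1 - t)⁻¹) ≤ (1 - t)⁻¹ - 1 :=
        Real.log_le_sub_one_of_pos (by positivity)
      rw [Real.log_inv] at h1
      have h2 : (1 - t)⁻¹ - 1 = t / (1 - t) := by
        field_simp
        ring
      linarith [h2 ▸ h1]
    have hlast : 4 * y ^ 2 / (D * π ^ 2 - 4 * y ^ 2) ≤
        4 * y ^ 2 / (π ^ 2 - 4 * y ^ 2) * (1 / D) := by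
      have e : 4 * y ^ 2 / (π ^ 2 - 4 * y ^ 2) * (1 / D) =
          4 * y ^ 2 / (D * (π ^ 2 - 4 * y ^ 2)) := by
        rw [div_mul_div_comm, mul_one, mul_comm (π ^ 2 - 4 * y ^ 2) D]
      rw [e]
      apply div_le_div_of_nonneg_left (by positivity) (by positivity)
      nlinarith
    rw [abs_of_nonpos hle]
    calc -Real.log (1 - t) ≤ t / (1 - t) := hlog
      _ = 4 * y ^ 2 / (D * π ^ 2 - 4 * y ^ 2) := hfrac
      _ ≤ _ := hlast
  have hsummable : Summable (fun j : ℕ =>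
      Real.log (1 - 4 * y ^ 2 / ((2 * (j:ℝ) + 1) ^ 2 * π ^ 2))) := by
    apply Summable.of_abs
    exact Summable.of_nonneg_of_le (fun j => abs_nonneg _) hbound
      (summable_inv_odd_sq.mul_left _)
  have h1 : Tendsto (fun N : ℕ => ∑ j ∈ Finset.range N,
      Real.log (1 - 4 * y ^ 2 / ((2 * (j:ℝ) + 1) ^ 2 * π ^ 2))) atTop
      (𝓝 (Real.log (cos y))) := by
    have h2 := ((Real.continuousAt_log hcos.ne').tendsto).comp (tendsto_cos_prod y hy)
    refine h2.congr (fun N => ?_)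
    rw [Function.comp_apply, Real.log_prod]
    exact fun j _ => (factor_pos hy j).ne'
  have := hsummable.hasSum.tendsto_sum_nat
  have heq := tendsto_nhds_unique this h1
  exact heq ▸ hsummable.hasSum

lemma hasSum_tan_pf (x : ℝ) (hx : |x| < π / 2) :
    HasSum (fun k : ℕ => 8 * x / ((2 * (k:ℝ) + 1) ^ 2 * π ^ 2 - 4 * x ^ 2)) (Real.tan x) := by
  have hπ := pi_pos
  set b : ℝ := (|x| + π / 2) / 2 with hb
  have hxb : |x| < b := by rw [hb]; linarith [abs_nonneg x]
  have hbπ : b < π / 2 := by rw [hb]; linarith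
  have hb0 : 0 < b := by rw [hb]; linarith [abs_nonneg x]
  have hbabs : |b| < π / 2 := by rwa [abs_of_pos hb0]
  have hεb : 0 < π ^ 2 - 4 * b ^ 2 := by nlinarith [abs_of_pos hb0 ▸ hbπ]
  set g : ℕ → ℝ → ℝ := fun j y => Real.log (1 - 4 * y ^ 2 / ((2 * (j:ℝ) + 1) ^ 2 * π ^ 2))
    with hg_def
  set g' : ℕ → ℝ → ℝ := fun j y => -(8 * y) / ((2 * (j:ℝ) + 1) ^ 2 * π ^ 2 - 4 * y ^ 2)
    with hg'_def
  set u : ℕ → ℝ := fun j => (8 * b / (π ^ 2 - 4 * b ^ 2)) * (1 / (2 * (j:ℝ) + 1) ^ 2) with hu_def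
  have hu : Summable u := summable_inv_odd_sq.mul_left _
  have hmem : ∀ y ∈ Set.Ioo (-b) b, |y| < π / 2 := by
    intro y hy
    rw [abs_lt]; exact ⟨by linarith [hy.1], by linarith [hy.2]⟩
  have hD1 : ∀ j : ℕ, (1:ℝ) ≤ (2 * (j:ℝ) + 1) ^ 2 := by
    intro j; nlinarith [Nat.cast_nonneg (α := ℝ) j]
  have hdenpos : ∀ (j : ℕ) (y : ℝ), |y| < π / 2 →
      0 < (2 * (j:ℝ) + 1) ^ 2 * π ^ 2 - 4 * y ^ 2 := by
    intro j y hy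
    have := factor_pos hy j
    have h2 : (0:ℝ) < (2 * (j:ℝ) + 1) ^ 2 * π ^ 2 := by positivity
    have h3 := mul_pos this h2
    rw [sub_mul, one_mul, div_mul_cancel₀ _ h2.ne'] at h3
    linarith
  have hderiv : ∀ (j : ℕ), ∀ y ∈ Set.Ioo (-b) b, HasDerivAt (g j) (g' j y) y := by
    intro j y hy
    have hyπ := hmem y hy
    have hpos := factor_pos hyπ j
    have hDπ : ((2 * (j:ℝ) + 1) ^ 2 * π ^ 2) ≠ 0 := by positivity
    have inner : HasDerivAt (fun y : ℝ => 1 - 4 * y ^ 2 / ((2 * (j:ℝ) + 1) ^ 2 * π ^ 2))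
        (-(8 * y) / ((2 * (j:ℝ) + 1) ^ 2 * π ^ 2)) y := by
      have h1 : HasDerivAt (fun y : ℝ => y ^ 2) (2 * y) y := by
        simpa using hasDerivAt_pow 2 y
      have h2 := ((h1.const_mul (4:ℝ)).div_const ((2 * (j:ℝ) + 1) ^ 2 * π ^ 2)).const_sub 1
      refine h2.congr_deriv ?_
      ring
      try ring
    have hlog := inner.log hpos.ne'
    convert hlog using 1
    rw [div_div]
    congr 1
    field_simp
    try ring
  have hbound : ∀ (j : ℕ), ∀ y ∈ Set.Ioo (-b) b, ‖g' j y‖ ≤ u j := by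
    intro j y hy
    have hyπ := hmem y hy
    have hden := hdenpos j y hyπ
    have hyb : |y| ≤ b := le_of_lt (abs_lt.mpr ⟨hy.1, hy.2⟩)
    have hy2b : y ^ 2 ≤ b ^ 2 := by nlinarith [abs_nonneg y, sq_abs y ▸ (by nlinarith [abs_nonneg y] : |y|^2 ≤ b^2)]
    have hdenb : 0 < (2 * (j:ℝ) + 1) ^ 2 * (π ^ 2 - 4 * b ^ 2) := by positivity
    have hdd : (2 * (j:ℝ) + 1) ^ 2 * (π ^ 2 - 4 * b ^ 2) ≤
        (2 * (j:ℝ) + 1) ^ 2 * π ^ 2 - 4 * y ^ 2 := by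
      have := hD1 j
      nlinarith
    have : ‖g' j y‖ = 8 * |y| / ((2 * (j:ℝ) + 1) ^ 2 * π ^ 2 - 4 * y ^ 2) := by
      rw [hg'_def]
      simp only [Real.norm_eq_abs, abs_div, abs_neg]
      rw [abs_of_pos hden, abs_mul]
      norm_num
    rw [this]
    have step1 : 8 * |y| / ((2 * (j:ℝ) + 1) ^ 2 * π ^ 2 - 4 * y ^ 2) ≤
        8 * b / ((2 * (j:ℝ) + 1) ^ 2 * (π ^ 2 - 4 * b ^ 2)) := by
      apply div_le_div₀ (by positivity) (by linarith) hdenb hdd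
    have step2 : 8 * b / ((2 * (j:ℝ) + 1) ^ 2 * (π ^ 2 - 4 * b ^ 2)) = u j := by
      simp only [hu_def]
      rw [div_mul_div_comm, mul_one, mul_comm ((2 * (j:ℝ) + 1) ^ 2) _]
    linarith [step2 ▸ step1]
  have h0mem : (0:ℝ) ∈ Set.Ioo (-b) b := ⟨by linarith, hb0⟩
  have hxmem : x ∈ Set.Ioo (-b) b := abs_lt.mp hxb
  have hsum0 : Summable fun j => g j 0 := by
    have : (fun j => g j 0) = fun _ => (0:ℝ) := by
      funext j; rw [hg_def]; norm_num
    rw [this]; exact summable_zero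
  have H := hasDerivAt_tsum_of_isPreconnected hu isOpen_Ioo isPreconnected_Ioo
    hderiv hbound h0mem hsum0 hxmem
  have Heq : (fun z => ∑' j, g j z) =ᶠ[nhds x] (fun z => Real.log (Real.cos z)) := by
    have : Set.Ioo (-b) b ∈ nhds x := isOpen_Ioo.mem_nhds hxmem
    filter_upwards [this] with z hz
    exact (hasSum_log_cos (hmem z hz)).tsum_eq
  have H2 : HasDerivAt (fun z => Real.log (Real.cos z)) (∑' j, g' j x) x :=
    H.congr_of_eventuallyEq Heq.symm
  have H3 : HasDerivAt (fun z => Real.log (Real.cos z)) (-Real.tan x) x := by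
    have hcos : 0 < Real.cos x := by
      rw [abs_lt] at hx; exact Real.cos_pos_of_mem_Ioo ⟨hx.1, hx.2⟩
    have := (Real.hasDerivAt_cos x).log hcos.ne'
    simpa [Real.tan_eq_sin_div_cos, neg_div] using this
  have htsum : ∑' j, g' j x = -Real.tan x := H2.unique H3
  have hsummable : Summable fun j => g' j x :=
    Summable.of_norm_bounded hu (fun j => hbound j x hxmem)
  have Hfinal : HasSum (fun j => g' j x) (-Real.tan x) := htsum ▸ hsummable.hasSum
  simpa [hg'_def, neg_div, neg_neg] using Hfinal.neg

lemma denpos {x : ℝ} (hx : |x| < π / 2) (j : ℕ) :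
    0 < (2 * (j:ℝ) + 1) ^ 2 * π ^ 2 - 4 * x ^ 2 := by
  have hπ := pi_pos
  have h1 := factor_pos hx j
  have h2 : (0:ℝ) < (2 * (j:ℝ) + 1) ^ 2 * π ^ 2 := by positivity
  have h3 := mul_pos h1 h2
  rw [sub_mul, one_mul, div_mul_cancel₀ _ h2.ne'] at h3
  linarith

lemma Geq {x : ℝ} (hx0 : x ≠ 0) (k m : ℕ) :
    2 * ((2 / π) ^ (2 * (m + 1)) * (1 / (2 * (k:ℝ) + 1) ^ (2 * (m + 1)))) *
        x ^ (2 * (m + 1) - 1) =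
      (2 / x) * ((2 * x / ((2 * (k:ℝ) + 1) * π)) ^ 2) ^ (m + 1) := by
  have hπ : (π:ℝ) ≠ 0 := pi_pos.ne'
  have hc : (2 * (k:ℝ) + 1) ≠ 0 := by positivity
  induction m with
  | zero =>
    norm_num
    field_simp
  | succ m ih =>
    have e1 : 2 * (m + 1 + 1) = 2 * (m + 1) + 2 := by ring
    have e2 : 2 * (m + 1 + 1) - 1 = (2 * (m + 1) - 1) + 2 := by omega
    rw [e2, e1, pow_add, pow_add, pow_add, pow_succ _ (m + 1)]
    have : 2 * ((2 / π) ^ (2 * (m + 1)) * (2 / π) ^ 2 *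
          (1 / ((2 * (k:ℝ) + 1) ^ (2 * (m + 1)) * (2 * (k:ℝ) + 1) ^ 2))) *
          (x ^ (2 * (m + 1) - 1) * x ^ 2) =
        (2 * ((2 / π) ^ (2 * (m + 1)) * (1 / (2 * (k:ℝ) + 1) ^ (2 * (m + 1)))) *
          x ^ (2 * (m + 1) - 1)) * ((2 / π) ^ 2 * (1 / (2 * (k:ℝ) + 1) ^ 2) * x ^ 2) := by
      simp only [one_div, mul_inv]
      ring
    have hQS : (2 / π) ^ 2 * (1 / (2 * (k:ℝ) + 1) ^ 2) * x ^ 2 =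
        (2 * x / ((2 * (k:ℝ) + 1) * π)) ^ 2 := by
      field_simp
      try ring
    rw [this, ih, hQS, mul_assoc]

lemma fiber_hasSum {x : ℝ} (hx : |x| < π / 2) (hx0 : x ≠ 0) (k : ℕ) :
    HasSum (fun m : ℕ => (2 / x) * ((2 * x / ((2 * (k:ℝ) + 1) * π)) ^ 2) ^ (m + 1))
      (8 * x / ((2 * (k:ℝ) + 1) ^ 2 * π ^ 2 - 4 * x ^ 2)) := by
  have hπ := pi_pos
  have hc : (0:ℝ) < 2 * (k:ℝ) + 1 := by positivity
  have hden := denpos hx k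
  set s := (2 * x / ((2 * (k:ℝ) + 1) * π)) ^ 2 with hs
  have hs0 : 0 ≤ s := sq_nonneg _
  have hs1 : s < 1 := by
    rw [hs, div_pow, div_lt_one (by positivity)]
    rw [mul_pow, mul_pow]
    nlinarith
  have hgeo := (hasSum_geometric_of_lt_one hs0 hs1).mul_left s
  have h2 := hgeo.mul_left (2 / x)
  have hfun : (fun m : ℕ => (2 / x) * (s * s ^ m)) =
      fun m : ℕ => (2 / x) * s ^ (m + 1) := by
    funext m; rw [pow_succ']
  rw [hfun] at h2
  have hval : (2 / x) * (s * (1 - s)⁻¹) =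
      8 * x / ((2 * (k:ℝ) + 1) ^ 2 * π ^ 2 - 4 * x ^ 2) := by
    have h1s : (0:ℝ) < 1 - s := by linarith
    have hxs : x * (1 - s) ≠ 0 := mul_ne_zero hx0 h1s.ne'
    rw [← div_eq_mul_inv, div_mul_div_comm, div_eq_div_iff hxs hden.ne', hs]
    field_simp
    ring
  rwa [hval] at h2

set_option maxHeartbeats 1000000 in
theorem hasSum_tan_series (x : ℝ) (hx : |x| < π / 2) :
    HasSum
      (fun m : ℕ =>
        2 * ((2 / π) ^ (2 * (m + 1)) * ∑' k : ℕ, 1 / (2 * (k : ℝ) + 1) ^ (2 * (m + 1))) *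
          x ^ (2 * (m + 1) - 1))
      (Real.tan x) := by
  have hπ := pi_pos
  rcases eq_or_ne x 0 with rfl | hx0
  · have h0 : (fun m : ℕ =>
        2 * ((2 / π) ^ (2 * (m + 1)) * ∑' k : ℕ, 1 / (2 * (k : ℝ) + 1) ^ (2 * (m + 1))) *
          (0:ℝ) ^ (2 * (m + 1) - 1)) = fun _ => (0:ℝ) := by
      funext m
      rw [zero_pow (by omega), mul_zero]
    rw [Real.tan_zero, h0]
    exact hasSum_zero
  set G : ℕ × ℕ → ℝ := fun p =>
    2 * ((2 / π) ^ (2 * (p.2 + 1)) * (1 / (2 * (p.1:ℝ) + 1) ^ (2 * (p.2 + 1)))) *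
      x ^ (2 * (p.2 + 1) - 1) with hG_def
  have hGeq : ∀ k m : ℕ, G (k, m) =
      (2 / x) * ((2 * x / ((2 * (k:ℝ) + 1) * π)) ^ 2) ^ (m + 1) := by
    intro k m
    simp only [hG_def]
    exact Geq hx0 k m
  have hfiberk : ∀ k : ℕ, HasSum (fun m => G (k, m))
      (8 * x / ((2 * (k:ℝ) + 1) ^ 2 * π ^ 2 - 4 * x ^ 2)) := by
    intro k
    have h := fiber_hasSum hx hx0 k
    have e : (fun m : ℕ => G (k, m)) =
        fun m => (2 / x) * ((2 * x / ((2 * (k:ℝ) + 1) * π)) ^ 2) ^ (m + 1) := by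
      funext m; exact hGeq k m
    rw [e]
    exact h
  have habs : |x| ≠ 0 := fun h => hx0 (abs_eq_zero.mp h)
  have hxabs : |(|x|)| < π / 2 := by rwa [abs_abs]
  have hsq : ∀ k : ℕ, (2 * |x| / ((2 * (k:ℝ) + 1) * π)) ^ 2 =
      (2 * x / ((2 * (k:ℝ) + 1) * π)) ^ 2 := by
    intro k
    rw [div_pow, div_pow, mul_pow, mul_pow, mul_pow, sq_abs]
  have hfiberkabs : ∀ k : ℕ, HasSum (fun m => |G (k, m)|)
      (8 * |x| / ((2 * (k:ℝ) + 1) ^ 2 * π ^ 2 - 4 * x ^ 2)) := by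
    intro k
    have h := fiber_hasSum hxabs habs k
    have e : (fun m : ℕ => (2 / |x|) * ((2 * |x| / ((2 * (k:ℝ) + 1) * π)) ^ 2) ^ (m + 1)) =
        fun m : ℕ => |G (k, m)| := by
      funext m
      rw [hsq k, hGeq k m, abs_mul, abs_div, abs_pow, abs_two, abs_of_nonneg (sq_nonneg (2 * x / ((2 * (k:ℝ) + 1) * π)))]
    have e2 : 4 * |x| ^ 2 = 4 * x ^ 2 := by rw [sq_abs]
    rw [e, e2] at h
    exact h
  have hGnonneg : 0 ≤ fun p : ℕ × ℕ => |G p| := fun p => abs_nonneg _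
  have hsumabs : Summable fun p : ℕ × ℕ => |G p| := by
    rw [summable_prod_of_nonneg hGnonneg]
    constructor
    · exact fun k => (hfiberkabs k).summable
    · have e3 : (fun k : ℕ => ∑' m, |G (k, m)|) =
          fun k : ℕ => 8 * |x| / ((2 * (k:ℝ) + 1) ^ 2 * π ^ 2 - 4 * x ^ 2) := by
        funext k; exact (hfiberkabs k).tsum_eq
      rw [e3]
      have hε : 0 < π ^ 2 - 4 * x ^ 2 := by rw [abs_lt] at hx; nlinarith
      refine Summable.of_nonneg_of_le
        (fun k => le_of_lt (div_pos (by positivity) (denpos hx k))) (fun k => ?_)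
        (summable_inv_odd_sq.mul_left (8 * |x| / (π ^ 2 - 4 * x ^ 2)))
      have hD1 : (1:ℝ) ≤ (2 * (k:ℝ) + 1) ^ 2 := by nlinarith [Nat.cast_nonneg (α := ℝ) k]
      have hdd : (2 * (k:ℝ) + 1) ^ 2 * (π ^ 2 - 4 * x ^ 2) ≤
          (2 * (k:ℝ) + 1) ^ 2 * π ^ 2 - 4 * x ^ 2 := by nlinarith
      have step : 8 * |x| / ((2 * (k:ℝ) + 1) ^ 2 * π ^ 2 - 4 * x ^ 2) ≤
          8 * |x| / ((2 * (k:ℝ) + 1) ^ 2 * (π ^ 2 - 4 * x ^ 2)) := by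
        apply div_le_div_of_nonneg_left (by positivity) (by positivity) hdd
      have step2 : 8 * |x| / ((2 * (k:ℝ) + 1) ^ 2 * (π ^ 2 - 4 * x ^ 2)) =
          8 * |x| / (π ^ 2 - 4 * x ^ 2) * (1 / (2 * (k:ℝ) + 1) ^ 2) := by
        rw [div_mul_div_comm, mul_one, mul_comm ((2 * (k:ℝ) + 1) ^ 2) _]
      linarith [step2 ▸ step]
  have hGsummable : Summable G := hsumabs.of_abs
  have hGtotal : HasSum G (Real.tan x) := by
    have h1 : HasSum (fun k : ℕ => 8 * x / ((2 * (k:ℝ) + 1) ^ 2 * π ^ 2 - 4 * x ^ 2))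
        (∑' p, G p) := hGsummable.hasSum.prod_fiberwise hfiberk
    have h2 := hasSum_tan_pf x hx
    have h5 := h1.unique h2
    exact h5 ▸ hGsummable.hasSum
  have hswap : HasSum (fun p : ℕ × ℕ => G (p.2, p.1)) (Real.tan x) :=
    (Equiv.prodComm ℕ ℕ).hasSum_iff.mpr hGtotal
  refine HasSum.prod_fiberwise hswap fun m => ?_
  have hh : Summable (fun k : ℕ => 1 / (2 * (k:ℝ) + 1) ^ (2 * (m + 1))) := by
    refine Summable.of_nonneg_of_le (fun k => by positivity) (fun k => ?_) summable_inv_odd_sq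
    have hc1 : (1:ℝ) ≤ 2 * (k:ℝ) + 1 := by nlinarith [Nat.cast_nonneg (α := ℝ) k]
    have hpow : (2 * (k:ℝ) + 1) ^ 2 ≤ (2 * (k:ℝ) + 1) ^ (2 * (m + 1)) :=
      pow_le_pow_right₀ hc1 (by omega)
    exact one_div_le_one_div_of_le (by positivity) hpow
  have h3 := (hh.hasSum.mul_left ((2 / π) ^ (2 * (m + 1)))).mul_left 2
  have h4 := h3.mul_right (x ^ (2 * (m + 1) - 1))
  exact h4

-- axiom check
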